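/- Assume E_S is T-torsion-free and write H := H^{dim S}_{mS}(S) ≅ E_S / Ann_{E_S}(J), where J ⊆ R is an E_S-ideal. Then the H-special ideals of S are exactly the ideals (L :_R J)·S, where L ranges over the E_S-special ideals of R contained in J. -/

import Mathlib

open IsLocalRing

/-- The `q`-th Frobenius power of an ideal: the ideal generated by `q`-th powers of elements. -/
def Ideal.frobPow {R : Type*} [CommSemiring R] (q : ℕ) (I : Ideal R) : Ideal R :=
  Ideal.span ((fun a => a ^ q) '' (I : Set R))

/-- A `q`-Frobenius map on a module `M`: additive, with `ψ (r • x) = r ^ q • ψ x`. -/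
structure FrobeniusMap (R : Type*) [CommSemiring R] (M : Type*) [AddCommMonoid M]
    [Module R M] (q : ℕ) where
  toFun : M → M
  map_add' : ∀ x y, toFun (x + y) = toFun x + toFun y
  map_smul' : ∀ (r : R) (x : M), toFun (r • x) = r ^ q • toFun x

/-- `E` is an injective hull of the residue field of the local ring `R`. -/
def IsInjectiveHullOfResidueField (R : Type*) [CommRing R] [IsLocalRing R]
    (E : Type*) [AddCommGroup E] [Module R E] : Prop :=
  Module.Injective R E ∧
    ∃ ι : ResidueField R →ₗ[R] E, Function.Injective ι ∧
      ∀ N : Submodule R E, N ≠ ⊥ → ∃ x, x ≠ 0 ∧ x ∈ N ∧ x ∈ LinearMap.range ι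

/-- Regularity for a Noetherian local ring: the maximal ideal is generated by
`dim R` elements. -/
def IsRegularLocal (R : Type*) [CommRing R] [IsLocalRing R] : Prop :=
  ∃ (n : ℕ) (x : Fin n → R), maximalIdeal R = Ideal.span (Set.range x) ∧
    ringKrullDim R = n

/-- `φ` is (up to normalization) the natural Frobenius on `E = E_R(R/m)`: every `e`-th
Frobenius map on `E` is uniquely of the form `u • φ^[e]`. -/
def IsNaturalFrobenius {R : Type*} [CommRing R] (p : ℕ) (E : Type*) [AddCommGroup E]
    [Module R E] (φ : FrobeniusMap R E p) : Prop :=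
  ∀ e : ℕ, 1 ≤ e → ∀ θ : FrobeniusMap R E (p ^ e),
    ∃! u : R, ∀ x : E, θ.toFun x = u • (φ.toFun)^[e] x

/-- The annihilator of an ideal `I` inside a module `E`, as a submodule of `E`. -/
def annIn {R : Type*} [CommRing R] (I : Ideal R) (E : Type*) [AddCommGroup E]
    [Module R E] : Submodule R E where
  carrier := { x | ∀ a ∈ I, a • x = 0 }
  add_mem' hx hy := fun a ha => by rw [smul_add, hx a ha, hy a ha, add_zero]
  zero_mem' := fun a _ => smul_zero a
  smul_mem' := fun r x hx a ha => by rw [smul_comm, hx a ha, smul_zero]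

/-- `ν_e = 1 + p + ⋯ + p^{e-1}`. -/
def nuExp (p e : ℕ) : ℕ := ∑ i ∈ Finset.range e, p ^ i


section SmallAux

open IsLocalRing

universe u v

variable {R : Type u} [CommRing R]

lemma mem_annIn {I : Ideal R} {E : Type v} [AddCommGroup E] [Module R E] {x : E} :
    x ∈ annIn I E ↔ ∀ a ∈ I, a • x = 0 := Iff.rfl

lemma small_quotient_pow [IsLocalRing R] [IsNoetherianRing R]
    [Small.{v} (ResidueField R)] (n : ℕ) :
    Small.{v} (R ⧸ (maximalIdeal R ^ n : Ideal R)) := by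
  induction n with
  | zero =>
    refine small_of_surjective
      (f := fun _ : PUnit => (0 : R ⧸ (maximalIdeal R ^ 0 : Ideal R))) (fun y => ?_)
    obtain ⟨x, rfl⟩ := Submodule.Quotient.mk_surjective _ y
    exact ⟨PUnit.unit, ((Submodule.Quotient.mk_eq_zero _).mpr (by simp)).symm⟩
  | succ n ih =>
    haveI := ih
    have hle : (maximalIdeal R ^ (n + 1) : Ideal R) ≤ maximalIdeal R ^ n :=
      Ideal.pow_le_pow_right (Nat.le_succ n)
    let π : (R ⧸ (maximalIdeal R ^ (n + 1) : Ideal R)) →ₗ[R]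
        R ⧸ (maximalIdeal R ^ n : Ideal R) :=
      Submodule.mapQ _ _ LinearMap.id hle
    have hπ : ∀ z : R, π (Submodule.Quotient.mk z) = Submodule.Quotient.mk z := fun z => rfl
    obtain ⟨d, xg, hxg⟩ := Submodule.fg_iff_exists_fin_generating_family.mp
      (IsNoetherian.noetherian (maximalIdeal R ^ n : Ideal R))
    have hxmem : ∀ i, xg i ∈ (maximalIdeal R ^ n : Ideal R) := fun i =>
      hxg ▸ Submodule.subset_span (Set.mem_range_self i)
    let sec : ResidueField R → R :=
      Function.surjInv (Ideal.Quotient.mk_surjective (I := maximalIdeal R))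
    have hsec : ∀ a : R, sec (Ideal.Quotient.mk (maximalIdeal R) a) - a ∈ maximalIdeal R := by
      intro a
      have h1 : Ideal.Quotient.mk (maximalIdeal R) (sec (Ideal.Quotient.mk (maximalIdeal R) a))
          = Ideal.Quotient.mk (maximalIdeal R) a :=
        Function.surjInv_eq (Ideal.Quotient.mk_surjective (I := maximalIdeal R)) _
      exact (Ideal.Quotient.mk_eq_mk_iff_sub_mem _ _).mp h1
    let ψ : (Fin d → ResidueField R) → {y : R ⧸ (maximalIdeal R ^ (n + 1) : Ideal R) // π y = 0} :=
      fun c =>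
      ⟨Submodule.Quotient.mk (∑ i, sec (c i) * xg i), by
        rw [hπ]
        exact (Submodule.Quotient.mk_eq_zero _).mpr
          (Submodule.sum_mem _ fun i _ => Ideal.mul_mem_left _ _ (hxmem i))⟩
    have hψ : Function.Surjective ψ := by
      rintro ⟨y, hy⟩
      obtain ⟨z, rfl⟩ := Submodule.Quotient.mk_surjective _ y
      have hz : z ∈ (maximalIdeal R ^ n : Ideal R) := by
        refine (Submodule.Quotient.mk_eq_zero _).mp ?_
        rw [← hπ z]; exact hy
      rw [← hxg] at hz
      obtain ⟨c, hc⟩ := (Submodule.mem_span_range_iff_exists_fun R).mp hz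
      refine ⟨fun i => Ideal.Quotient.mk _ (c i), Subtype.ext ?_⟩
      show Submodule.Quotient.mk _ = Submodule.Quotient.mk z
      rw [Submodule.Quotient.eq]
      have e1 : (∑ i, sec (Ideal.Quotient.mk (maximalIdeal R) (c i)) * xg i) - z
          = ∑ i, (sec (Ideal.Quotient.mk (maximalIdeal R) (c i)) - c i) * xg i := by
        rw [← hc, ← Finset.sum_sub_distrib]
        refine Finset.sum_congr rfl fun i _ => ?_
        rw [sub_mul, smul_eq_mul]
      rw [e1]
      refine Submodule.sum_mem _ fun i _ => ?_
      have h2 := Ideal.mul_mem_mul (hsec (c i)) (hxmem i)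
      rwa [show (maximalIdeal R ^ (n + 1) : Ideal R) = maximalIdeal R * maximalIdeal R ^ n by
        rw [pow_succ, mul_comm]]
    haveI hf0 : Small.{v} {y : R ⧸ (maximalIdeal R ^ (n + 1) : Ideal R) // π y = 0} :=
      small_of_surjective hψ
    haveI hfib : ∀ c : R ⧸ (maximalIdeal R ^ n : Ideal R),
        Small.{v} {y : R ⧸ (maximalIdeal R ^ (n + 1) : Ideal R) // π y = c} := by
      intro c
      obtain ⟨w, hw⟩ : ∃ y0 : R ⧸ (maximalIdeal R ^ (n + 1) : Ideal R), π y0 = c := by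
        obtain ⟨z, rfl⟩ := Submodule.Quotient.mk_surjective _ c
        exact ⟨Submodule.Quotient.mk z, hπ z⟩
      refine small_of_injective (f := fun t : {y // π y = c} =>
        (⟨t.1 - w, by rw [map_sub, t.2, hw, sub_self]⟩ :
          {y : R ⧸ (maximalIdeal R ^ (n + 1) : Ideal R) // π y = 0})) ?_
      intro a b hab
      have h3 := congrArg Subtype.val hab
      exact Subtype.ext (by simpa [sub_left_inj] using h3)
    exact small_of_surjective (Equiv.sigmaFiberEquiv π).surjective

lemma small_of_adic [IsLocalRing R] [IsNoetherianRing R]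
    (hcomp : IsAdicComplete (maximalIdeal R) R) [Small.{v} (ResidueField R)] :
    Small.{v} R := by
  haveI : ∀ n : ℕ, Small.{v} (R ⧸ (maximalIdeal R ^ n : Ideal R)) :=
    fun n => small_quotient_pow n
  refine small_of_injective (f := fun (r : R) (n : ℕ) =>
    (Submodule.Quotient.mk r : R ⧸ (maximalIdeal R ^ n : Ideal R))) ?_
  intro a b hab
  have h0 : a - b = 0 := by
    refine hcomp.toIsHausdorff.haus (a - b) fun n => ?_
    rw [SModEq.zero]
    have h1 : (Submodule.Quotient.mk a : R ⧸ (maximalIdeal R ^ n : Ideal R))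
        = Submodule.Quotient.mk b := congrFun hab n
    have h2 : a - b ∈ (maximalIdeal R ^ n : Ideal R) := (Submodule.Quotient.eq _).mp h1
    have h3 : (maximalIdeal R ^ n • ⊤ : Submodule R R) = (maximalIdeal R ^ n : Ideal R) := by
      refine le_antisymm (Submodule.smul_le.mpr fun r hr m _ => ?_) (fun x hx => ?_)
      · simpa [smul_eq_mul] using Ideal.mul_mem_right m _ hr
      · simpa [smul_eq_mul] using Submodule.smul_mem_smul hx (Submodule.mem_top (R := R) (x := (1 : R)))
    rw [h3]; exact h2
  exact sub_eq_zero.mp h0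

lemma ann_annIn_le [IsLocalRing R] (E : Type v)
    [AddCommGroup E] [Module R E] [Small.{v} R]
    (hinj : Module.Injective R E)
    (ι : ResidueField R →ₗ[R] E) (hι : Function.Injective ι)
    (J : Ideal R) : (annIn J E).annihilator ≤ J := by
  intro r hr
  by_contra hrJ
  haveI : Module.Injective R E := hinj
  let τ : R →ₗ[R] R ⧸ (J : Submodule R R) :=
    LinearMap.toSpanSingleton R (R ⧸ (J : Submodule R R)) (Submodule.Quotient.mk r)
  have hτ : ∀ a : R, τ a = Submodule.Quotient.mk (a * r) := by
    intro a
    show a • (Submodule.Quotient.mk r : R ⧸ (J : Submodule R R)) = _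
    rw [← Submodule.Quotient.mk_smul, smul_eq_mul]
  let g0 : R →ₗ[R] E := ι ∘ₗ (maximalIdeal R).mkQ
  have hker : LinearMap.ker τ ≤ LinearMap.ker g0 := by
    intro a ha
    have h1 : a * r ∈ J := by
      refine (Submodule.Quotient.mk_eq_zero _).mp ?_
      rw [← hτ a]; exact LinearMap.mem_ker.mp ha
    have h2 : a ∈ maximalIdeal R := by
      by_contra hmem
      have hu : IsUnit a := by
        by_contra hna
        exact hmem (IsLocalRing.mem_maximalIdeal a |>.mpr (mem_nonunits_iff.mpr hna))
      obtain ⟨w, rfl⟩ := hu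
      refine hrJ ?_
      have h4 := J.mul_mem_left (↑w⁻¹) h1
      rwa [← mul_assoc, Units.inv_mul, one_mul] at h4
    show ι ((maximalIdeal R).mkQ a) = 0
    have h5 : ((maximalIdeal R).mkQ a) = 0 := (Submodule.Quotient.mk_eq_zero _).mpr h2
    rw [h5]; exact map_zero ι
  let g1 : (R ⧸ LinearMap.ker τ) →ₗ[R] E := Submodule.liftQ _ g0 hker
  let F0 : (LinearMap.range τ : Submodule R (R ⧸ (J : Submodule R R))) →ₗ[R] E :=
    g1 ∘ₗ (LinearMap.quotKerEquivRange τ).symm.toLinearMap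
  obtain ⟨F, hF⟩ := Module.Injective.extension_property R E _ _
    (Submodule.subtype _) (Submodule.injective_subtype _) F0
  set x := F (Submodule.Quotient.mk 1) with hx
  have hxJ : x ∈ annIn J E := by
    intro a ha
    have h6 : a • (Submodule.Quotient.mk (1:R) : R ⧸ (J : Submodule R R)) = 0 := by
      rw [← Submodule.Quotient.mk_smul, smul_eq_mul, mul_one]
      exact (Submodule.Quotient.mk_eq_zero _).mpr ha
    rw [hx, ← map_smul, h6, map_zero]
  have hmem : (Submodule.Quotient.mk r : R ⧸ (J : Submodule R R)) ∈ LinearMap.range τ :=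
    ⟨1, by rw [hτ 1, one_mul]⟩
  have hrx : r • x = ι (Submodule.Quotient.mk (1:R)) := by
    have e1 : r • x = F (Submodule.Quotient.mk r) := by
      rw [hx, ← map_smul]
      congr 1
      rw [← Submodule.Quotient.mk_smul, smul_eq_mul, mul_one]
    have e3 := LinearMap.congr_fun hF
      (⟨Submodule.Quotient.mk r, hmem⟩ :
        (LinearMap.range τ : Submodule R (R ⧸ (J : Submodule R R))))
    have e4 : (LinearMap.quotKerEquivRange τ) (Submodule.Quotient.mk 1)
        = ⟨Submodule.Quotient.mk r, hmem⟩ := by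
      apply Subtype.ext
      rw [LinearMap.quotKerEquivRange_apply_mk, hτ 1, one_mul]
    have e5 : (LinearMap.quotKerEquivRange τ).symm ⟨Submodule.Quotient.mk r, hmem⟩
        = Submodule.Quotient.mk 1 := by
      rw [← e4, LinearEquiv.symm_apply_apply]
    rw [e1]
    calc F (Submodule.Quotient.mk r)
        = F ((LinearMap.range τ).subtype ⟨Submodule.Quotient.mk r, hmem⟩) := rfl
      _ = F0 ⟨Submodule.Quotient.mk r, hmem⟩ := e3
      _ = g1 ((LinearMap.quotKerEquivRange τ).symm ⟨Submodule.Quotient.mk r, hmem⟩) := rfl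
      _ = g1 (Submodule.Quotient.mk 1) := by rw [e5]
      _ = g0 1 := Submodule.liftQ_apply _ g0 1
      _ = ι (Submodule.Quotient.mk (1:R)) := rfl
  have hcontra : r • x = 0 := Submodule.mem_annihilator.mp hr x hxJ
  rw [hrx] at hcontra
  have h7 : (Submodule.Quotient.mk (1:R) : ResidueField R) = 0 := by
    apply hι
    rw [hcontra]; exact (map_zero ι).symm
  have h8 : (1:R) ∈ maximalIdeal R := (Submodule.Quotient.mk_eq_zero _).mp h7
  exact (IsLocalRing.maximalIdeal.isMaximal R).ne_top
    (Ideal.eq_top_of_isUnit_mem _ h8 isUnit_one)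

end SmallAux


/-- Assume `E_S = Ann_E I` (with `T` acting as the restriction of
`u • φ`) is `T`-torsion-free and let `J ⊆ R` be an `E_S`-ideal, so that
`H := H^{dim S}_{mS}(S) ≅ E_S / Ann_{E_S}(J)` is an `S[T;f]`-module.  Then the `H`-special
ideals — the annihilators `(Ann_{E_S}(J) :_R W)` of `T`-stable submodules
`Ann_{E_S}(J) ≤ W ≤ E_S` of the quotient — are exactly the ideals `(L :_R J)` where `L`
ranges over the `E_S`-special ideals of `R` contained in `J`. -/
theorem stmt17 {R : Type*} [CommRing R] [IsLocalRing R] [IsNoetherianRing R]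
    (p : ℕ) [Fact p.Prime] [CharP R p]
    (hreg : IsRegularLocal R) (hcomp : IsAdicComplete (maximalIdeal R) R)
    (E : Type*) [AddCommGroup E] [Module R E]
    (hE : IsInjectiveHullOfResidueField R E)
    (φ : FrobeniusMap R E p) (hφ : IsNaturalFrobenius p E φ)
    (I : Ideal R) (u : R) (hu : u ∈ Submodule.colon (Ideal.frobPow p I) I)
    (htf : ∀ x ∈ annIn I E, (∃ m, (fun y => u • φ.toFun y)^[m] x = 0) → x = 0)
    (J : Ideal R) (hJI : I ≤ J)
    (hJ : ∀ x ∈ annIn J E, u • φ.toFun x ∈ annIn J E) :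
    { K : Ideal R |
        ∃ W : Submodule R E, annIn J E ≤ W ∧ W ≤ annIn I E ∧
          (∀ x ∈ W, u • φ.toFun x ∈ W) ∧ K = Submodule.colon (annIn J E) W } =
    { K : Ideal R |
        ∃ L : Ideal R,
          (∃ M : Submodule R E, M ≤ annIn I E ∧ (∀ x ∈ M, u • φ.toFun x ∈ M) ∧
            L = M.annihilator) ∧
          L ≤ J ∧ K = Submodule.colon L J } := by
  obtain ⟨hinj, ι, hι, -⟩ := hE
  haveI hsk : Small.{_} (ResidueField R) := small_of_injective hι
  haveI hsR : Small.{_} R := small_of_adic hcomp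
  have hkey : (annIn J E).annihilator ≤ J := ann_annIn_le E hinj ι hι J
  have hIJ : annIn J E ≤ annIn I E := fun x hx a ha => hx a (hJI ha)
  ext K
  simp only [Set.mem_setOf_eq]
  constructor
  · rintro ⟨W, hAW, hWI, hWst, rfl⟩
    refine ⟨W.annihilator, ⟨W, hWI, hWst, rfl⟩,
      le_trans (Submodule.annihilator_mono hAW) hkey, ?_⟩
    ext r
    rw [Submodule.mem_colon, Submodule.mem_colon]
    constructor
    · intro h a ha
      rw [Submodule.mem_annihilator]
      intro w hw
      have h1 := (mem_annIn.mp (h w hw)) a ha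
      rwa [smul_eq_mul, mul_comm, ← smul_smul]
    · intro h w hw
      rw [mem_annIn]
      intro a ha
      have h1 := Submodule.mem_annihilator.mp (h a ha) w hw
      rwa [smul_eq_mul, mul_comm, ← smul_smul] at h1
  · rintro ⟨L, ⟨M, hMI, hMst, rfl⟩, hLJ, rfl⟩
    refine ⟨annIn J E ⊔ M, le_sup_left, sup_le hIJ hMI, ?_, ?_⟩
    · intro x hx
      obtain ⟨y, hy, z, hz, rfl⟩ := Submodule.mem_sup.mp hx
      have h1 : u • φ.toFun (y + z) = u • φ.toFun y + u • φ.toFun z := by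
        rw [φ.map_add', smul_add]
      rw [h1]
      exact Submodule.add_mem _ (Submodule.mem_sup_left (hJ y hy))
        (Submodule.mem_sup_right (hMst z hz))
    · ext r
      rw [Submodule.mem_colon, Submodule.mem_colon]
      constructor
      · intro h x hx
        obtain ⟨y, hy, z, hz, rfl⟩ := Submodule.mem_sup.mp hx
        rw [smul_add]
        refine Submodule.add_mem _ (Submodule.smul_mem _ r hy) ?_
        rw [mem_annIn]
        intro a ha
        have h1 := Submodule.mem_annihilator.mp (h a ha) z hz
        rwa [smul_eq_mul, mul_comm, ← smul_smul] at h1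
      · intro h a ha
        rw [Submodule.mem_annihilator]
        intro z hz
        have h1 := (mem_annIn.mp (h z (Submodule.mem_sup_right hz))) a ha
        rwa [smul_eq_mul, mul_comm, ← smul_smul]
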